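/- arXiv:2403.00304 — 7 statements merged into one kernel-verified Lean document; each statement's English description precedes it below -/
import Mathlib

section
/- Let 0 < β < α < 1, let f(s) = (α(1−s) + (1−β)s)/(1−βs), and let y ≥ 1 be an integer. Then for every real s with |s| ≤ 1, f(s)^y = α^y + ∑_{m=1}^{∞} [ ∑_{j=1}^{min(m,y)} C(y,j)·C(m−1,j−1)·((1−α)(1−β))^j·α^{y−j}·β^{m−j} ]·s^m, where C(·,·) denotes the binomial coefficient. (Equivalently, the y-fold convolution of the pmf p_{G*} with itself assigns mass α^y to 0 and mass ∑_{j=1}^{min(m,y)} C(y,j)C(m−1,j−1)((1−α)(1−β))^j α^{y−j} β^{m−j} to each m ≥ 1.) -/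
/-- pgf of the NoGeAR(1) counting variable G*. -/
noncomputable def fG (α β : ℝ) (s : ℝ) : ℝ :=
  (α * (1 - s) + (1 - β) * s) / (1 - β * s)

theorem pG_pgf_pow (α β : ℝ) (hβ : 0 < β) (hβα : β < α) (hα : α < 1)
    (y : ℕ) (hy : 1 ≤ y) (s : ℝ) (hs : |s| ≤ 1) :
    HasSum (fun m : ℕ =>
        (∑ j ∈ Finset.Icc 1 (min (m + 1) y),
          (y.choose j : ℝ) * (m.choose (j - 1) : ℝ) *
            ((1 - α) * (1 - β)) ^ j * α ^ (y - j) * β ^ (m + 1 - j)) * s ^ (m + 1))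
      (fG α β s ^ y - α ^ y) := by
  obtain ⟨A, hA⟩ : ∃ A : ℝ, A = (1 - α) * (1 - β) := ⟨_, rfl⟩
  rw [← hA]
  have hβ1 : β < 1 := hβα.trans hα
  have hr : ‖β * s‖ < 1 := by
    rw [Real.norm_eq_abs, abs_mul, abs_of_pos hβ]
    calc β * |s| ≤ β * 1 := by nlinarith [abs_nonneg s]
      _ < 1 := by linarith
  have habs : |β * s| < 1 := by rwa [Real.norm_eq_abs] at hr
  have hD : (1 : ℝ) - β * s ≠ 0 := by
    have : β * s < 1 := lt_of_abs_lt habs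
    linarith
  obtain ⟨u, hu⟩ : ∃ u : ℝ, u = A * s / (1 - β * s) := ⟨_, rfl⟩
  -- the term function, extended to all j
  set t : ℕ → ℕ → ℝ := fun j m =>
    (y.choose j : ℝ) * (m.choose (j - 1) : ℝ) * A ^ j * α ^ (y - j) * β ^ (m + 1 - j)
      * s ^ (m + 1) with ht
  -- for each j ≥ 1, HasSum of t j
  have key : ∀ j ∈ Finset.Icc 1 y, HasSum (t j)
      ((y.choose j : ℝ) * α ^ (y - j) * u ^ j) := by
    intro j hj
    rw [Finset.mem_Icc] at hj
    obtain ⟨hj1, hjy⟩ := hj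
    obtain ⟨C, hC⟩ : ∃ C : ℝ, C = (y.choose j : ℝ) * A ^ j * α ^ (y - j) * s ^ j := ⟨_, rfl⟩
    have base := (hasSum_choose_mul_geometric_of_norm_lt_one (j - 1) hr).mul_left C
    have hsucc : j - 1 + 1 = j := Nat.succ_pred_eq_of_pos hj1
    rw [hsucc] at base
    have heq : ∀ n : ℕ, t j (n + (j - 1))
        = C * (((n + (j - 1)).choose (j - 1) : ℝ) * (β * s) ^ n) := by
      intro n
      have e1 : n + (j - 1) + 1 - j = n := by omega
      have e2 : n + (j - 1) + 1 = n + j := by omega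
      simp only [ht]
      rw [e1, e2]
      rw [hC, mul_pow, pow_add]
      ring
    have hvalC : C * (1 / (1 - β * s) ^ j)
        = (y.choose j : ℝ) * α ^ (y - j) * u ^ j := by
      rw [hC, hu, div_pow, mul_pow]
      field_simp
    have base2 : HasSum (fun n => t j (n + (j - 1)))
        ((y.choose j : ℝ) * α ^ (y - j) * u ^ j) := by
      rw [← hvalC]
      exact HasSum.congr_fun base heq
    have hinj : Function.Injective (fun n : ℕ => n + (j - 1)) :=
      add_left_injective _
    have hzero : ∀ m, m ∉ Set.range (fun n : ℕ => n + (j - 1)) → t j m = 0 := by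
      intro m hm
      have hm' : m < j - 1 := by
        by_contra h
        push_neg at h
        exact hm ⟨m - (j - 1), by simp; omega⟩
      simp only [ht]
      simp only [Nat.choose_eq_zero_of_lt hm', Nat.cast_zero]
      ring
    exact (Function.Injective.hasSum_iff hinj hzero).mp base2
  -- sum over j
  have hsum := hasSum_sum key
  -- identify the function
  have hfun : ∀ m : ℕ, (∑ j ∈ Finset.Icc 1 (min (m + 1) y),
          (y.choose j : ℝ) * (m.choose (j - 1) : ℝ) *
            A ^ j * α ^ (y - j) * β ^ (m + 1 - j)) * s ^ (m + 1)
      = (∑ j ∈ Finset.Icc 1 y, t j m) := by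
    intro m
    rw [Finset.sum_mul]
    apply Finset.sum_subset ?_ ?_
    · intro j hj
      rw [Finset.mem_Icc] at hj ⊢
      exact ⟨hj.1, hj.2.trans (min_le_right _ _)⟩
    · intro j hj hj'
      rw [Finset.mem_Icc] at hj hj'
      have hlt : m < j - 1 := by omega
      simp only [ht, Nat.choose_eq_zero_of_lt hlt, Nat.cast_zero]
      ring
  -- identify the value
  have hval : (∑ j ∈ Finset.Icc 1 y, (y.choose j : ℝ) * α ^ (y - j) * u ^ j)
      = fG α β s ^ y - α ^ y := by
    have hfG : fG α β s = u + α := by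
      rw [fG, hu, hA]
      rw [div_add' _ _ _ hD]
      congr 1
      ring
    rw [hfG, add_pow]
    rw [Finset.sum_range_succ']
    have hIcc : Finset.Icc 1 y = Finset.Ico 1 (y + 1) := by
      rw [Finset.Ico_add_one_right_eq_Icc]
    rw [hIcc, Finset.sum_Ico_eq_sum_range]
    simp only [Nat.add_sub_cancel, pow_zero, one_mul, Nat.choose_zero_right,
      Nat.cast_one, Nat.sub_zero, mul_one]
    rw [add_sub_cancel_right]
    apply Finset.sum_congr rfl
    intro i _
    rw [add_comm 1 i]
    ring
  rw [← hval]
  exact HasSum.congr_fun hsum hfun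
end

section
/- Let 0 < β < α < 1 and β < θ < 1, and set λ = (αθ−β)/(θ−β). Define f(s) = (α(1−s) + (1−β)s)/(1−βs), g(s) = (1−θ)/(1−θs), and P_ε(s) = λ(1−θ)/(1−θs) + (1−λ)(1−β)/(1−βs). Then for every real s with 0 ≤ s ≤ 1, g(s) = P_ε(s)·g(f(s)). (This identity expresses that the geometric(θ) distribution is the stationary marginal of the NoGeAR(1) recursion X_t = ω ⊛ X_{t−1} + ε_t.) -/
/-- pgf of the geometric(θ) distribution with pmf (1-θ)θ^x. -/
noncomputable def gGeom (θ : ℝ) (s : ℝ) : ℝ := (1 - θ) / (1 - θ * s)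

/-- pgf of the NoGeAR(1) innovation distribution. -/
noncomputable def Peps (α β θ : ℝ) (s : ℝ) : ℝ :=
  ((α * θ - β) / (θ - β)) * (1 - θ) / (1 - θ * s)
    + (1 - (α * θ - β) / (θ - β)) * (1 - β) / (1 - β * s)

theorem geometric_stationary (α β θ : ℝ) (hβ : 0 < β) (hβα : β < α) (hα : α < 1)
    (hβθ : β < θ) (hθ : θ < 1) (s : ℝ) (hs0 : 0 ≤ s) (hs1 : s ≤ 1) :
    gGeom θ s = Peps α β θ s * gGeom θ (fG α β s) := by
  have hθ0 : 0 < θ := hβ.trans hβθ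
  have hβs : (0:ℝ) < 1 - β * s := by nlinarith
  have hθs : (0:ℝ) < 1 - θ * s := by nlinarith
  have hθβ : (0:ℝ) < θ - β := by linarith
  have hnum : (0:ℝ) < (1 - θ * α) - s * (θ * (1 - α) + β * (1 - θ)) := by
    rcases eq_or_lt_of_le hs0 with h | h
    · subst h; nlinarith
    · nlinarith [mul_pos h (mul_pos (by linarith : (0:ℝ) < 1 - θ) (by linarith : (0:ℝ) < 1 - β)), mul_nonneg (by linarith : (0:ℝ) ≤ 1 - s) (by nlinarith : (0:ℝ) ≤ 1 - θ * α)]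
  have hden : 1 - θ * fG α β s = ((1 - θ * α) - s * (θ * (1 - α) + β * (1 - θ))) / (1 - β * s) := by
    rw [fG, ← mul_div_assoc, one_sub_div hβs.ne']
    congr 1
    ring
  unfold gGeom Peps
  rw [hden]
  rw [div_div_eq_mul_div]
  rw [div_add_div _ _ hθs.ne' hβs.ne', div_mul_div_comm, div_eq_div_iff hθs.ne' (by positivity)]
  field_simp
  ring
end

section
/- Let 0 < β < α < 1 and let f(s) = (α(1−s) + (1−β)s)/(1−βs). For every integer h ≥ 1 and every real s with 0 ≤ s ≤ 1, the h-fold iterate f^{(h)}(s) = f(f(···f(s)···)) (h times) equals [ ((−1)^{h+1}α^h + ∑_{i=1}^{h−1}(−1)^{i+1}α^i ∑_{j=0}^{h−i} C(h,j)(−β)^{h−j−i})·(1−s) + (1−β)^h·s ] / [ 1 + β(1−s)·∑_{i=1}^{h−1}(−α)^i ∑_{j=0}^{h−i−1} C(h,j)(−β)^{h−j−i−1} − βs·∑_{j=0}^{h−1} C(h,j)(−β)^{h−j−1} ], where C(·,·) denotes the binomial coefficient and empty sums are zero. -/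
lemma fG_geom1 (α β : ℝ) (m : ℕ) :
    (α - β) * ∑ i ∈ Finset.Icc 1 m, (-1:ℝ)^(i+1) * α^i * (-β)^(m-i)
      = α * ((-β)^m - (-α)^m) := by
  induction m with
  | zero => simp
  | succ m ih =>
    rw [Finset.sum_Icc_succ_top (by omega : 1 ≤ m+1)]
    have e : ∑ i ∈ Finset.Icc 1 m, (-1:ℝ)^(i+1) * α^i * (-β)^(m+1-i)
        = (-β) * ∑ i ∈ Finset.Icc 1 m, (-1:ℝ)^(i+1) * α^i * (-β)^(m-i) := by
      rw [Finset.mul_sum]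
      refine Finset.sum_congr rfl (fun i hi => ?_)
      have hi' : i ≤ m := (Finset.mem_Icc.mp hi).2
      have : m + 1 - i = (m - i) + 1 := by omega
      rw [this, pow_succ]; ring
    rw [e, Nat.sub_self]
    linear_combination (-β) * ih

lemma fG_geom2 (α β : ℝ) (m : ℕ) :
    (α - β) * ∑ i ∈ Finset.Icc 1 m, (-α)^i * (-β)^(m-i)
      = α * ((-α)^m - (-β)^m) := by
  induction m with
  | zero => simp
  | succ m ih =>
    rw [Finset.sum_Icc_succ_top (by omega : 1 ≤ m+1)]
    have e : ∑ i ∈ Finset.Icc 1 m, (-α:ℝ)^i * (-β)^(m+1-i)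
        = (-β) * ∑ i ∈ Finset.Icc 1 m, (-α:ℝ)^i * (-β)^(m-i) := by
      rw [Finset.mul_sum]
      refine Finset.sum_congr rfl (fun i hi => ?_)
      have hi' : i ≤ m := (Finset.mem_Icc.mp hi).2
      have : m + 1 - i = (m - i) + 1 := by omega
      rw [this, pow_succ]; ring
    rw [e, Nat.sub_self]
    linear_combination (-β) * ih

lemma fG_binom_full (x : ℝ) (h : ℕ) :
    ∑ j ∈ Finset.range (h+1), (h.choose j : ℝ) * x^(h-j) = (1+x)^h := by
  rw [add_pow]
  exact Finset.sum_congr rfl (fun j _ => by rw [one_pow, one_mul, mul_comm])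

lemma fG_binom_partial (x : ℝ) (h : ℕ) :
    ∑ j ∈ Finset.range h, (h.choose j : ℝ) * x^(h-j) = (1+x)^h - 1 := by
  rw [← fG_binom_full x h, Finset.sum_range_succ]
  simp

lemma fG_numId (α β : ℝ) (h : ℕ) (hh : 1 ≤ h) :
    (α - β) * ((-1 : ℝ) ^ (h + 1) * α ^ h
      + ∑ i ∈ Finset.Icc 1 (h - 1), (-1 : ℝ) ^ (i + 1) * α ^ i *
          ∑ j ∈ Finset.range (h - i + 1), (h.choose j : ℝ) * (-β) ^ (h - j - i))
    = α * ((1-β)^h - (1-α)^h) := by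
  have habs : (-1 : ℝ) ^ (h + 1) * α ^ h
      + ∑ i ∈ Finset.Icc 1 (h - 1), (-1 : ℝ) ^ (i + 1) * α ^ i *
          ∑ j ∈ Finset.range (h - i + 1), (h.choose j : ℝ) * (-β) ^ (h - j - i)
      = ∑ i ∈ Finset.Icc 1 h, (-1 : ℝ) ^ (i + 1) * α ^ i *
          ∑ j ∈ Finset.range (h - i + 1), (h.choose j : ℝ) * (-β) ^ (h - j - i) := by
    obtain ⟨k, rfl⟩ : ∃ k, h = k + 1 := ⟨h - 1, by omega⟩
    rw [Finset.sum_Icc_succ_top (by omega : 1 ≤ k + 1)]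
    have h1 : k + 1 - (k + 1) + 1 = 1 := by omega
    have h2 : k + 1 - 0 - (k + 1) = 0 := by omega
    simp only [Nat.add_sub_cancel, h1, Finset.sum_range_one, h2, pow_zero, Nat.choose_zero_right,
      Nat.cast_one, mul_one]
    ring
  rw [habs]
  have hpad : ∑ i ∈ Finset.Icc 1 h, (-1 : ℝ) ^ (i + 1) * α ^ i *
          ∑ j ∈ Finset.range (h - i + 1), (h.choose j : ℝ) * (-β) ^ (h - j - i)
      = ∑ i ∈ Finset.Icc 1 h, ∑ j ∈ Finset.range (h+1),
          (if i + j ≤ h then (-1 : ℝ) ^ (i + 1) * α ^ i * ((h.choose j : ℝ) * (-β) ^ (h - j - i)) else 0) := by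
    refine Finset.sum_congr rfl (fun i hi => ?_)
    have hi' : i ≤ h := (Finset.mem_Icc.mp hi).2
    have hset : Finset.filter (fun j => i + j ≤ h) (Finset.range (h+1)) = Finset.range (h - i + 1) := by
      ext j; simp only [Finset.mem_filter, Finset.mem_range]; omega
    rw [Finset.mul_sum, ← Finset.sum_filter, hset]
  rw [hpad, Finset.sum_comm]
  have hunpad : ∀ j ∈ Finset.range (h+1),
      (∑ i ∈ Finset.Icc 1 h,
        (if i + j ≤ h then (-1 : ℝ) ^ (i + 1) * α ^ i * ((h.choose j : ℝ) * (-β) ^ (h - j - i)) else 0))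
      = (h.choose j : ℝ) * ∑ i ∈ Finset.Icc 1 (h - j), (-1 : ℝ) ^ (i + 1) * α ^ i * (-β) ^ (h - j - i) := by
    intro j _
    have hset : Finset.filter (fun i => i + j ≤ h) (Finset.Icc 1 h) = Finset.Icc 1 (h - j) := by
      ext i; simp only [Finset.mem_filter, Finset.mem_Icc]; omega
    rw [← Finset.sum_filter, hset, Finset.mul_sum]
    exact Finset.sum_congr rfl (fun i _ => by ring)
  rw [Finset.sum_congr rfl hunpad, Finset.mul_sum]
  have hg : ∀ j ∈ Finset.range (h+1),
      (α - β) * ((h.choose j : ℝ) * ∑ i ∈ Finset.Icc 1 (h - j), (-1 : ℝ) ^ (i + 1) * α ^ i * (-β) ^ (h - j - i))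
      = (h.choose j : ℝ) * (α * (-β)^(h-j)) - (h.choose j : ℝ) * (α * (-α)^(h-j)) := by
    intro j _
    have := fG_geom1 α β (h - j)
    linear_combination (h.choose j : ℝ) * this
  rw [Finset.sum_congr rfl hg, Finset.sum_sub_distrib]
  have e1 : ∀ (x : ℝ), ∑ j ∈ Finset.range (h+1), (h.choose j : ℝ) * (α * x^(h-j))
      = α * (1+x) ^ h := by
    intro x
    rw [← fG_binom_full x h, Finset.mul_sum]
    exact Finset.sum_congr rfl (fun j _ => by ring)
  rw [e1 (-β), e1 (-α)]
  ring

lemma fG_sumS (β : ℝ) (h : ℕ) :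
    β * ∑ j ∈ Finset.range h, (h.choose j : ℝ) * (-β) ^ (h - j - 1)
      = 1 - (1-β)^h := by
  have e : ∀ j ∈ Finset.range h, β * ((h.choose j : ℝ) * (-β) ^ (h - j - 1))
      = -((h.choose j : ℝ) * (-β) ^ (h - j)) := by
    intro j hj
    have hj' : j < h := Finset.mem_range.mp hj
    have : h - j = (h - j - 1) + 1 := by omega
    rw [this]
    have : h - j - 1 + 1 - 1 = h - j - 1 := by omega
    rw [this, pow_succ]; ring
  rw [Finset.mul_sum, Finset.sum_congr rfl e, Finset.sum_neg_distrib, fG_binom_partial]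
  ring

lemma fG_denId (α β : ℝ) (h : ℕ) (hh : 1 ≤ h) :
    β * (α - β) * ∑ i ∈ Finset.Icc 1 (h - 1), (-α) ^ i *
        ∑ j ∈ Finset.range (h - i), (h.choose j : ℝ) * (-β) ^ (h - j - i - 1)
      = α * (1-β)^h - β * (1-α)^h - (α - β) := by
  have hpad : ∑ i ∈ Finset.Icc 1 (h - 1), (-α : ℝ) ^ i *
        ∑ j ∈ Finset.range (h - i), (h.choose j : ℝ) * (-β) ^ (h - j - i - 1)
      = ∑ i ∈ Finset.Icc 1 (h - 1), ∑ j ∈ Finset.range h,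
          (if i + j + 1 ≤ h then (-α : ℝ) ^ i * ((h.choose j : ℝ) * (-β) ^ (h - j - i - 1)) else 0) := by
    refine Finset.sum_congr rfl (fun i hi => ?_)
    have hi' : i ≤ h - 1 := (Finset.mem_Icc.mp hi).2
    have hi1 : 1 ≤ i := (Finset.mem_Icc.mp hi).1
    have hset : Finset.filter (fun j => i + j + 1 ≤ h) (Finset.range h) = Finset.range (h - i) := by
      ext j; simp only [Finset.mem_filter, Finset.mem_range]; omega
    rw [Finset.mul_sum, ← Finset.sum_filter, hset]
  rw [hpad, Finset.sum_comm]
  have hunpad : ∀ j ∈ Finset.range h,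
      (∑ i ∈ Finset.Icc 1 (h - 1),
        (if i + j + 1 ≤ h then (-α : ℝ) ^ i * ((h.choose j : ℝ) * (-β) ^ (h - j - i - 1)) else 0))
      = (h.choose j : ℝ) * ∑ i ∈ Finset.Icc 1 (h - 1 - j), (-α : ℝ) ^ i * (-β) ^ (h - 1 - j - i) := by
    intro j hj
    have hj' : j < h := Finset.mem_range.mp hj
    have hset : Finset.filter (fun i => i + j + 1 ≤ h) (Finset.Icc 1 (h - 1)) = Finset.Icc 1 (h - 1 - j) := by
      ext i; simp only [Finset.mem_filter, Finset.mem_Icc]; omega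
    rw [← Finset.sum_filter, hset, Finset.mul_sum]
    refine Finset.sum_congr rfl (fun i hi => ?_)
    have : h - j - i - 1 = h - 1 - j - i := by omega
    rw [this]; ring
  rw [Finset.sum_congr rfl hunpad, Finset.mul_sum]
  have hg : ∀ j ∈ Finset.range h,
      β * (α - β) * ((h.choose j : ℝ) * ∑ i ∈ Finset.Icc 1 (h - 1 - j), (-α : ℝ) ^ i * (-β) ^ (h - 1 - j - i))
      = (h.choose j : ℝ) * (α * (-β)^(h-j)) - (h.choose j : ℝ) * (β * (-α)^(h-j)) := by
    intro j hj
    have hj' : j < h := Finset.mem_range.mp hj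
    have hgeo := fG_geom2 α β (h - 1 - j)
    have h1 : h - j = (h - 1 - j) + 1 := by omega
    rw [h1, pow_succ, pow_succ]
    linear_combination (h.choose j : ℝ) * β * hgeo
  rw [Finset.sum_congr rfl hg, Finset.sum_sub_distrib]
  have e1 : ∀ (x c : ℝ), ∑ j ∈ Finset.range h, (h.choose j : ℝ) * (c * x^(h-j))
      = c * ((1+x) ^ h - 1) := by
    intro x c
    rw [← fG_binom_partial x h, Finset.mul_sum]
    exact Finset.sum_congr rfl (fun j _ => by ring)
  rw [e1 (-β) α, e1 (-α) β]
  ring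

lemma fG_denpos (α β : ℝ) (hβ : 0 < β) (hβα : β < α) (hα : α < 1)
    (s : ℝ) (hs0 : 0 ≤ s) (hs1 : s ≤ 1) (h : ℕ) :
    0 < (1-β)^h * (α - β*s) - β * (1-α)^h * (1-s) := by
  have h1 : (1-α)^h ≤ (1-β)^h :=
    pow_le_pow_left₀ (by linarith) (by linarith) h
  have h2 : 0 < (1-β)^h := pow_pos (by linarith) h
  nlinarith [mul_le_mul_of_nonneg_left h1 (mul_nonneg hβ.le (by linarith : (0:ℝ) ≤ 1 - s)),
    mul_pos h2 (by linarith : (0:ℝ) < α - β)]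

lemma fG_closedForm (α β : ℝ) (hβ : 0 < β) (hβα : β < α) (hα : α < 1)
    (s : ℝ) (hs0 : 0 ≤ s) (hs1 : s ≤ 1) (h : ℕ) :
    (fG α β)^[h] s =
      ((1-β)^h * (α - β*s) - α * (1-α)^h * (1-s)) /
      ((1-β)^h * (α - β*s) - β * (1-α)^h * (1-s)) := by
  induction h with
  | zero =>
    have hne : α - β ≠ 0 := by linarith
    have e1 : (1-β:ℝ)^0 * (α - β*s) - α * (1-α)^0 * (1-s) = (α - β) * s := by ring
    have e2 : (1-β:ℝ)^0 * (α - β*s) - β * (1-α)^0 * (1-s) = α - β := by ring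
    rw [Function.iterate_zero_apply, e1, e2, mul_comm, mul_div_assoc, div_self hne, mul_one]
  | succ k ih =>
    rw [Function.iterate_succ_apply', ih]
    set N := (1-β)^k * (α - β*s) - α * (1-α)^k * (1-s) with hN
    set D := (1-β)^k * (α - β*s) - β * (1-α)^k * (1-s) with hD
    have hDpos : 0 < D := fG_denpos α β hβ hβα hα s hs0 hs1 k
    have hD'pos : 0 < (1-β)^(k+1) * (α - β*s) - β * (1-α)^(k+1) * (1-s) :=
      fG_denpos α β hβ hβα hα s hs0 hs1 (k+1)
    have hDBN : D - β * N = (1-β)^(k+1) * (α - β*s) - β * (1-α)^(k+1) * (1-s) := by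
      rw [hN, hD]; ring
    have hDne : D ≠ 0 := ne_of_gt hDpos
    have hD'ne : (1-β)^(k+1) * (α - β*s) - β * (1-α)^(k+1) * (1-s) ≠ 0 := ne_of_gt hD'pos
    unfold fG
    have e1 : α * (1 - N/D) + (1-β) * (N/D)
        = ((1-β)^(k+1) * (α - β*s) - α * (1-α)^(k+1) * (1-s)) / D := by
      field_simp
      rw [hN, hD]; ring
    have e2 : 1 - β * (N/D)
        = ((1-β)^(k+1) * (α - β*s) - β * (1-α)^(k+1) * (1-s)) / D := by
      rw [← hDBN]
      field_simp
    rw [e1, e2, div_div_div_cancel_right₀]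
    exact hDne

theorem fG_iterate_closed_form (α β : ℝ) (hβ : 0 < β) (hβα : β < α) (hα : α < 1)
    (h : ℕ) (hh : 1 ≤ h) (s : ℝ) (hs0 : 0 ≤ s) (hs1 : s ≤ 1) :
    (fG α β)^[h] s =
      (((-1 : ℝ) ^ (h + 1) * α ^ h
          + ∑ i ∈ Finset.Icc 1 (h - 1), (-1 : ℝ) ^ (i + 1) * α ^ i *
              ∑ j ∈ Finset.range (h - i + 1), (h.choose j : ℝ) * (-β) ^ (h - j - i))
          * (1 - s)
        + (1 - β) ^ h * s)
      /
      (1 + β * (1 - s) *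
          ∑ i ∈ Finset.Icc 1 (h - 1), (-α) ^ i *
            ∑ j ∈ Finset.range (h - i), (h.choose j : ℝ) * (-β) ^ (h - j - i - 1)
        - β * s * ∑ j ∈ Finset.range h, (h.choose j : ℝ) * (-β) ^ (h - j - 1)) := by
  have hne : α - β ≠ 0 := by linarith
  have hnum := fG_numId α β h hh
  have hden := fG_denId α β h hh
  have hS := fG_sumS β h
  have e1 : (1-β)^h * (α - β*s) - α * (1-α)^h * (1-s)
      = (α - β) * (((-1 : ℝ) ^ (h + 1) * α ^ h
          + ∑ i ∈ Finset.Icc 1 (h - 1), (-1 : ℝ) ^ (i + 1) * α ^ i *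
              ∑ j ∈ Finset.range (h - i + 1), (h.choose j : ℝ) * (-β) ^ (h - j - i))
          * (1 - s)
        + (1 - β) ^ h * s) := by
    linear_combination (s - 1) * hnum
  have e2 : (1-β)^h * (α - β*s) - β * (1-α)^h * (1-s)
      = (α - β) * (1 + β * (1 - s) *
          ∑ i ∈ Finset.Icc 1 (h - 1), (-α) ^ i *
            ∑ j ∈ Finset.range (h - i), (h.choose j : ℝ) * (-β) ^ (h - j - i - 1)
        - β * s * ∑ j ∈ Finset.range h, (h.choose j : ℝ) * (-β) ^ (h - j - 1)) := by
    linear_combination (s - 1) * hden + (α - β) * s * hS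
  rw [fG_closedForm α β hβ hβα hα s hs0 hs1 h, e1, e2, mul_div_mul_left _ _ hne]
end

section
/- Let 0 < β < α < 1 and β < θ < 1, set λ = (αθ−β)/(θ−β), and define f(s) = (α(1−s) + (1−β)s)/(1−βs), g(s) = (1−θ)/(1−θs), and P_ε(s) = λ(1−θ)/(1−θs) + (1−λ)(1−β)/(1−βs). Then for every integer h ≥ 1 and every real s with 0 ≤ s ≤ 1, ∏_{j=0}^{h−1} P_ε(f^{(j)}(s)) = g(s)/g(f^{(h)}(s)), where f^{(j)} denotes the j-fold iterate of f with f^{(0)}(s) = s. Consequently, the h-step ahead conditional probability generating function of the NoGeAR(1) process satisfies P_{X_{t+h}|X_t}(s) = ∏_{j=0}^{h−1} P_ε(f^{(j)}(s))·(f^{(h)}(s))^{X_t} = g(s)·[g(f^{(h)}(s))]^{−1}·(f^{(h)}(s))^{X_t}. -/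
lemma fG_mem (α β : ℝ) (hβ : 0 < β) (hβα : β < α) (hα : α < 1)
    (s : ℝ) (hs0 : 0 ≤ s) (hs1 : s ≤ 1) : 0 ≤ fG α β s ∧ fG α β s ≤ 1 := by
  have hα0 : 0 < α := hβ.trans hβα
  have hden : 0 < 1 - β * s := by nlinarith
  constructor
  · rw [fG]
    apply div_nonneg _ hden.le
    nlinarith
  · rw [fG, div_le_one hden]
    nlinarith

lemma onestep (α β θ : ℝ) (hβ : 0 < β) (hβα : β < α) (hα : α < 1)
    (hβθ : β < θ) (hθ : θ < 1)
    (s : ℝ) (hs0 : 0 ≤ s) (hs1 : s ≤ 1) :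
    Peps α β θ s = gGeom θ s / gGeom θ (fG α β s) := by
  have hα0 : 0 < α := hβ.trans hβα
  have hdβ : (0:ℝ) < 1 - β * s := by nlinarith
  have hdθ : (0:ℝ) < 1 - θ * s := by nlinarith
  obtain ⟨hf0, hf1⟩ := fG_mem α β hβ hβα hα s hs0 hs1
  have hdf : (0:ℝ) < 1 - θ * fG α β s := by nlinarith
  have hθβ : θ - β ≠ 0 := by linarith
  have h1θ : (1:ℝ) - θ ≠ 0 := by linarith
  rw [Peps, gGeom, gGeom]
  rw [fG] at hdf ⊢
  field_simp
  ring

lemma iter_mem (α β : ℝ) (hβ : 0 < β) (hβα : β < α) (hα : α < 1)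
    (s : ℝ) (hs0 : 0 ≤ s) (hs1 : s ≤ 1) (j : ℕ) :
    0 ≤ (fG α β)^[j] s ∧ (fG α β)^[j] s ≤ 1 := by
  induction j with
  | zero => exact ⟨hs0, hs1⟩
  | succ n ih =>
    rw [Function.iterate_succ_apply']
    exact fG_mem α β hβ hβα hα _ ih.1 ih.2

lemma prod_eq (α β θ : ℝ) (hβ : 0 < β) (hβα : β < α) (hα : α < 1)
    (hβθ : β < θ) (hθ : θ < 1)
    (s : ℝ) (hs0 : 0 ≤ s) (hs1 : s ≤ 1) (h : ℕ) :
    ∏ j ∈ Finset.range h, Peps α β θ ((fG α β)^[j] s)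
      = gGeom θ s / gGeom θ ((fG α β)^[h] s) := by
  induction h with
  | zero =>
    simp only [Finset.range_zero, Finset.prod_empty, Function.iterate_zero_apply]
    rw [div_self]
    rw [gGeom]
    exact div_ne_zero (by linarith) (by nlinarith)
  | succ n ih =>
    obtain ⟨h0, h1⟩ := iter_mem α β hβ hβα hα s hs0 hs1 n
    have hg : gGeom θ ((fG α β)^[n] s) ≠ 0 := by
      rw [gGeom]
      exact div_ne_zero (by linarith) (by nlinarith)
    rw [Finset.prod_range_succ, ih, Function.iterate_succ_apply',
      onestep α β θ hβ hβα hα hβθ hθ _ h0 h1]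
    field_simp

theorem hstep_pgf (α β θ : ℝ) (hβ : 0 < β) (hβα : β < α) (hα : α < 1)
    (hβθ : β < θ) (hθ : θ < 1)
    (h : ℕ) (hh : 1 ≤ h) (s : ℝ) (hs0 : 0 ≤ s) (hs1 : s ≤ 1) :
    (∏ j ∈ Finset.range h, Peps α β θ ((fG α β)^[j] s)
        = gGeom θ s / gGeom θ ((fG α β)^[h] s)) ∧
    ∀ x : ℕ,
      (∏ j ∈ Finset.range h, Peps α β θ ((fG α β)^[j] s)) * ((fG α β)^[h] s) ^ x
        = gGeom θ s * (gGeom θ ((fG α β)^[h] s))⁻¹ * ((fG α β)^[h] s) ^ x := by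
  have hp := prod_eq α β θ hβ hβα hα hβθ hθ s hs0 hs1 h
  exact ⟨hp, fun x => by rw [hp, div_eq_mul_inv]⟩
end

section
/- Let 0 < β < α < 1, β < θ < 1 and β < αθ, set λ = (αθ−β)/(θ−β), let p_ε(x) = λθ^x(1−θ) + (1−λ)β^x(1−β), let f(s) = (α(1−s)+(1−β)s)/(1−βs) and P_ε(s) = λ(1−θ)/(1−θs) + (1−λ)(1−β)/(1−βs). Define the one-step transition function p1(y,x) by: p1(0,0) = 1−αθ; p1(0,x) = p_ε(x) for x ≥ 1; p1(y,0) = α^y(1−αθ) for y ≥ 1; and for x ≥ 1, y ≥ 1, p1(y,x) = α^y p_ε(x) + ∑_{m=1}^{x} ∑_{j=1}^{min(m,y)} C(y,j)C(m−1,j−1)((1−α)(1−β))^j α^{y−j} β^{m−j} p_ε(x−m). Then for every integer y ≥ 0 and every real s with |s| ≤ 1, P_ε(s)·f(s)^y = ∑_{x=0}^{∞} p1(y,x)·s^x; i.e., Eq. (4) gives exactly the coefficients of the one-step ahead conditional probability generating function of the NoGeAR(1) process. -/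
/-- NoGeAR(1) innovation pmf. -/
noncomputable def pEps (α β θ : ℝ) (x : ℕ) : ℝ :=
  ((α * θ - β) / (θ - β)) * θ ^ x * (1 - θ)
    + (1 - (α * θ - β) / (θ - β)) * β ^ x * (1 - β)

/-- One-step transition probabilities of the NoGeAR(1) chain (Eq. (4)). -/
noncomputable def p1 (α β θ : ℝ) (y x : ℕ) : ℝ :=
  if y = 0 then
    (if x = 0 then 1 - α * θ else pEps α β θ x)
  else if x = 0 then α ^ y * (1 - α * θ)
  else
    α ^ y * pEps α β θ x
      + ∑ m ∈ Finset.Icc 1 x, ∑ j ∈ Finset.Icc 1 (min m y),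
          (y.choose j : ℝ) * ((m - 1).choose (j - 1) : ℝ) *
            ((1 - α) * (1 - β)) ^ j * α ^ (y - j) * β ^ (m - j) * pEps α β θ (x - m)

/-- Coefficients of `fG^y`. -/
noncomputable def qy (α β : ℝ) (y m : ℕ) : ℝ :=
  if m = 0 then α ^ y
  else ∑ j ∈ Finset.Icc 1 (min m y),
    (y.choose j : ℝ) * ((m - 1).choose (j - 1) : ℝ) *
      ((1 - α) * (1 - β)) ^ j * α ^ (y - j) * β ^ (m - j)

lemma pEps_zero {α β θ : ℝ} (h : θ ≠ β) : pEps α β θ 0 = 1 - α * θ := by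
  have h' : θ - β ≠ 0 := sub_ne_zero.2 h
  unfold pEps
  field_simp
  ring

lemma p1_eq_conv {α β θ : ℝ} (h : θ ≠ β) (y x : ℕ) :
    p1 α β θ y x = ∑ m ∈ Finset.range (x + 1), qy α β y m * pEps α β θ (x - m) := by
  rw [Finset.sum_range_succ']
  have hq0 : qy α β y 0 = α ^ y := by simp [qy]
  rcases Nat.eq_zero_or_pos y with hy | hy
  · subst hy
    have h1 : ∀ i ∈ Finset.range x, qy α β 0 (i + 1) * pEps α β θ (x - (i + 1)) = 0 := by
      intro i _
      simp [qy]
    rw [Finset.sum_congr rfl h1]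
    simp only [Finset.sum_const_zero, zero_add, hq0, pow_zero, one_mul, Nat.sub_zero]
    rcases Nat.eq_zero_or_pos x with hx | hx
    · subst hx; simp [p1, pEps_zero h]
    · simp [p1, Nat.pos_iff_ne_zero.mp hx]
  · have hy' : y ≠ 0 := Nat.pos_iff_ne_zero.mp hy
    rcases Nat.eq_zero_or_pos x with hx | hx
    · subst hx
      simp [p1, hy', hq0, pEps_zero h]
    · have hx' : x ≠ 0 := Nat.pos_iff_ne_zero.mp hx
      rw [p1]
      simp only [hy', hx', if_false, hq0, Nat.sub_zero]
      rw [add_comm (α ^ y * pEps α β θ x)]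
      congr 1
      rw [show Finset.Icc 1 x = Finset.Ico 1 (x + 1) from (Finset.Ico_add_one_right_eq_Icc 1 x).symm,
        Finset.sum_Ico_eq_sum_range]
      simp only [Nat.add_sub_cancel]
      apply Finset.sum_congr rfl
      intro i _
      rw [show 1 + i = i + 1 by omega, qy, if_neg (by omega), Finset.sum_mul]

lemma hasSum_shift {β s : ℝ} (hβs : |β * s| < 1) {j : ℕ} (hj : 1 ≤ j) :
    HasSum (fun m : ℕ => if m = 0 then 0 else
        ((m - 1).choose (j - 1) : ℝ) * β ^ (m - j) * s ^ m) ((s / (1 - β * s)) ^ j) := by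
  have hβs' : ‖β * s‖ < 1 := by rwa [Real.norm_eq_abs]
  have H := (hasSum_choose_mul_geometric_of_norm_lt_one (j - 1) hβs').mul_right (s ^ j)
  apply (hasSum_nat_add_iff' j).1
  have hz : ∀ i ∈ Finset.range j, (if i = 0 then (0:ℝ) else
      ((i - 1).choose (j - 1) : ℝ) * β ^ (i - j) * s ^ i) = 0 := by
    intro i hi
    rcases Nat.eq_zero_or_pos i with hi0 | hi0
    · simp [hi0]
    · rw [if_neg (Nat.pos_iff_ne_zero.mp hi0)]
      rw [Finset.mem_range] at hi
      rw [Nat.choose_eq_zero_of_lt (by omega)]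
      simp
  rw [Finset.sum_congr rfl hz, Finset.sum_const_zero, sub_zero]
  convert H using 2 with n
  · rfl
  · rw [if_neg (by omega)]
    have h1 : n + j - 1 = n + (j - 1) := by omega
    have h2 : n + j - j = n := by omega
    rw [h1, h2, mul_pow, pow_add]
    ring
  · rw [show j - 1 + 1 = j from by omega, div_pow, one_div, inv_mul_eq_div]

lemma hasSum_qy {α β : ℝ} (hβ : 0 < β) (hβα : β < α) (hα : α < 1)
    (y : ℕ) (s : ℝ) (hs : |s| ≤ 1) :
    HasSum (fun m : ℕ => qy α β y m * s ^ m) (fG α β s ^ y) := by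
  have hβs : |β * s| < 1 := by
    rw [abs_mul, abs_of_pos hβ]
    calc β * |s| ≤ β * 1 := by nlinarith [abs_nonneg s]
      _ < 1 := by linarith
  have h1 : (1 : ℝ) - β * s ≠ 0 := by
    have := abs_lt.mp hβs
    intro hc; nlinarith [this.2]
  set c : ℝ := (1 - α) * (1 - β) with hc
  clear_value c
  set T : ℕ → ℕ → ℝ := fun j m =>
    if j = 0 then (if m = 0 then α ^ y else 0)
    else if m = 0 then 0
    else (y.choose j : ℝ) * ((m - 1).choose (j - 1) : ℝ) * c ^ j * α ^ (y - j)
      * β ^ (m - j) * s ^ m with hT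
  have claim1 : ∀ m, qy α β y m * s ^ m = ∑ j ∈ Finset.range (y + 1), T j m := by
    intro m
    rcases Nat.eq_zero_or_pos m with hm | hm
    · subst hm
      rw [Finset.sum_eq_single 0]
      · simp [qy, hT]
      · intro j _ hj; simp [hT, hj]
      · intro hj; simp at hj
    · have hm' : m ≠ 0 := Nat.pos_iff_ne_zero.mp hm
      have hsub : Finset.Icc 1 (min m y) ⊆ Finset.range (y + 1) := by
        intro j hj; rw [Finset.mem_Icc] at hj; rw [Finset.mem_range]; omega
      have hzero : ∀ j ∈ Finset.range (y + 1), j ∉ Finset.Icc 1 (min m y) → T j m = 0 := by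
        intro j hjr hjn
        rcases Nat.eq_zero_or_pos j with hj0 | hj0
        · simp [hT, hj0, hm']
        · rw [Finset.mem_range] at hjr
          rw [Finset.mem_Icc] at hjn
          push_neg at hjn
          have hjm : m < j := by
            have h2 : m < j ∨ y < j := min_lt_iff.mp (hjn hj0)
            omega
          simp only [hT, if_neg (Nat.pos_iff_ne_zero.mp hj0), if_neg hm']
          rw [Nat.choose_eq_zero_of_lt (show m - 1 < j - 1 by omega)]
          simp
      rw [qy, if_neg hm', Finset.sum_mul, ← Finset.sum_subset hsub hzero]
      apply Finset.sum_congr rfl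
      intro j hj
      rw [Finset.mem_Icc] at hj
      have hj1 : j ≠ 0 := by omega
      simp only [hT, if_neg hj1, if_neg hm']
      rw [← hc]
  have claim2 : ∀ j ∈ Finset.range (y + 1), HasSum (T j)
      ((c * s / (1 - β * s)) ^ j * α ^ (y - j) * (y.choose j : ℝ)) := by
    intro j _
    rcases Nat.eq_zero_or_pos j with hj0 | hj0
    · subst hj0
      simp only [hT, pow_zero, one_mul, Nat.choose_zero_right, Nat.cast_one, mul_one,
        Nat.sub_zero, if_true]
      exact hasSum_ite_eq 0 (α ^ y)
    · have hj0' : j ≠ 0 := Nat.pos_iff_ne_zero.mp hj0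
      have H := (hasSum_shift hβs hj0).mul_left ((y.choose j : ℝ) * c ^ j * α ^ (y - j))
      have hfun : T j = fun m => (y.choose j : ℝ) * c ^ j * α ^ (y - j) *
          (if m = 0 then 0 else ((m - 1).choose (j - 1) : ℝ) * β ^ (m - j) * s ^ m) := by
        funext m
        simp only [hT, if_neg hj0']
        rcases eq_or_ne m 0 with hm | hm
        · simp [hm]
        · rw [if_neg hm, if_neg hm]; ring
      have hval : (c * s / (1 - β * s)) ^ j * α ^ (y - j) * (y.choose j : ℝ)
          = (y.choose j : ℝ) * c ^ j * α ^ (y - j) * (s / (1 - β * s)) ^ j := by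
        rw [div_pow, div_pow, mul_pow]
        ring
      rw [hfun, hval]
      exact H
  have claim3 : ∑ j ∈ Finset.range (y + 1),
      (c * s / (1 - β * s)) ^ j * α ^ (y - j) * (y.choose j : ℝ) = fG α β s ^ y := by
    rw [← add_pow]
    rw [fG, hc]
    congr 1
    field_simp
    ring
  have Hsum := hasSum_sum claim2
  rw [claim3] at Hsum
  have heq : (fun m => qy α β y m * s ^ m) = fun m => ∑ j ∈ Finset.range (y + 1), T j m :=
    funext claim1
  rw [heq]
  exact Hsum

lemma qy_nonneg {α β : ℝ} (hβ : 0 < β) (hβα : β < α) (hα : α < 1) (y m : ℕ) :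
    0 ≤ qy α β y m := by
  have hα0 : 0 < α := hβ.trans hβα
  have h1 : (0:ℝ) ≤ 1 - α := by linarith
  have h2 : (0:ℝ) ≤ 1 - β := by linarith
  unfold qy
  split
  · positivity
  · apply Finset.sum_nonneg
    intro j _
    positivity

lemma pEps_nonneg {α β θ : ℝ} (hβ : 0 < β) (hβα : β < α) (hα : α < 1)
    (hβθ : β < θ) (hθ : θ < 1) (hβαθ : β < α * θ) (x : ℕ) :
    0 ≤ pEps α β θ x := by
  have hθ0 : 0 < θ := hβ.trans hβθ
  have h1 : 0 < θ - β := by linarith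
  have h2 : (0:ℝ) ≤ (α * θ - β) / (θ - β) := div_nonneg (by linarith) h1.le
  have h3 : (0:ℝ) ≤ 1 - (α * θ - β) / (θ - β) := by
    rw [sub_nonneg, div_le_one h1]
    nlinarith
  unfold pEps
  have h4 : (0:ℝ) ≤ 1 - θ := by linarith
  have h5 : (0:ℝ) ≤ 1 - β := by linarith
  positivity

lemma hasSum_pEps {α β θ : ℝ} (hβ : 0 < β) (hθ0 : 0 < θ) (hβ1 : β < 1) (hθ : θ < 1)
    (s : ℝ) (hs : |s| ≤ 1) :
    HasSum (fun x : ℕ => pEps α β θ x * s ^ x) (Peps α β θ s) := by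
  have hθs : ‖θ * s‖ < 1 := by
    rw [Real.norm_eq_abs, abs_mul, abs_of_pos hθ0]
    calc θ * |s| ≤ θ * 1 := by nlinarith [abs_nonneg s]
      _ < 1 := by linarith
  have hβs : ‖β * s‖ < 1 := by
    rw [Real.norm_eq_abs, abs_mul, abs_of_pos hβ]
    calc β * |s| ≤ β * 1 := by nlinarith [abs_nonneg s]
      _ < 1 := by linarith
  have H1 := (hasSum_geometric_of_norm_lt_one hθs).mul_left
    ((α * θ - β) / (θ - β) * (1 - θ))
  have H2 := (hasSum_geometric_of_norm_lt_one hβs).mul_left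
    ((1 - (α * θ - β) / (θ - β)) * (1 - β))
  have H := H1.add H2
  convert H using 1
  · rfl
  · funext x
    rw [pEps, mul_pow, mul_pow]
    ring
  · simp only [Peps, div_eq_mul_inv]

theorem p1_pgf (α β θ : ℝ) (hβ : 0 < β) (hβα : β < α) (hα : α < 1)
    (hβθ : β < θ) (hθ : θ < 1) (hβαθ : β < α * θ)
    (y : ℕ) (s : ℝ) (hs : |s| ≤ 1) :
    HasSum (fun x : ℕ => p1 α β θ y x * s ^ x) (Peps α β θ s * fG α β s ^ y) := by
  have hθβ : θ ≠ β := ne_of_gt hβθ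
  have hθ0 : 0 < θ := hβ.trans hβθ
  have hβ1 : β < 1 := hβα.trans hα
  have hs' : |(|s|)| ≤ 1 := by rwa [abs_abs]
  have hq := hasSum_qy hβ hβα hα y s hs
  have hp := hasSum_pEps (α := α) hβ hθ0 hβ1 hθ s hs
  have hq' := hasSum_qy hβ hβα hα y (|s|) hs'
  have hp' := hasSum_pEps (α := α) hβ hθ0 hβ1 hθ (|s|) hs'
  have hfnorm : Summable (fun m => ‖qy α β y m * s ^ m‖) := by
    apply hq'.summable.congr
    intro m
    rw [norm_mul, norm_pow, Real.norm_eq_abs, Real.norm_eq_abs,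
      abs_of_nonneg (qy_nonneg hβ hβα hα y m)]
  have hgnorm : Summable (fun x => ‖pEps α β θ x * s ^ x‖) := by
    apply hp'.summable.congr
    intro x
    rw [norm_mul, norm_pow, Real.norm_eq_abs, Real.norm_eq_abs,
      abs_of_nonneg (pEps_nonneg hβ hβα hα hβθ hθ hβαθ x)]
  have H := hasSum_sum_range_mul_of_summable_norm hfnorm hgnorm
  rw [hq.tsum_eq, hp.tsum_eq] at H
  have heq : (fun n => ∑ k ∈ Finset.range (n + 1),
      qy α β y k * s ^ k * (pEps α β θ (n - k) * s ^ (n - k)))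
      = fun n => p1 α β θ y n * s ^ n := by
    funext n
    rw [p1_eq_conv hθβ, Finset.sum_mul]
    apply Finset.sum_congr rfl
    intro k hk
    rw [Finset.mem_range] at hk
    have hpow : s ^ k * s ^ (n - k) = s ^ n := by
      rw [← pow_add]
      congr 1
      omega
    rw [mul_mul_mul_comm, hpow]
  rw [heq, mul_comm (fG α β s ^ y)] at H
  exact H
end

section
/- Let 0 < β < α < 1 and β < θ < 1, set ω = (1−α)/(1−β), f(s) = (α(1−s) + (1−β)s)/(1−βs), and g(s) = (1−θ)/(1−θs). Fix integers h ≥ 1 and x ≥ 0 and define F(s) = g(s)·(f^{(h)}(s))^x / g(f^{(h)}(s)), the h-step ahead conditional probability generating function of the NoGeAR(1) process given X_t = x. Then the derivative of F at s = 1 equals ω^h·x + ((1−ω^h)/(1−ω))·μ_ε, where μ_ε = (1−ω)θ/(1−θ); equivalently, the h-step ahead conditional mean is E[X_{t+h}|X_t = x] = ω^h·x + (1−ω^h)·θ/(1−θ). -/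
lemma fG_one {α β : ℝ} (hβ : β < 1) : fG α β 1 = 1 := by
  have : (1:ℝ) - β ≠ 0 := by linarith
  simp [fG, this]

lemma fG_hasDerivAt {α β : ℝ} (hβ : β < 1) :
    HasDerivAt (fG α β) ((1 - α) / (1 - β)) 1 := by
  have hne : (1:ℝ) - β * 1 ≠ 0 := by simp; linarith
  have hnum : HasDerivAt (fun s : ℝ => α * (1 - s) + (1 - β) * s) (1 - α - β) 1 := by
    have h1 : HasDerivAt (fun s : ℝ => α * (1 - s)) (-α) 1 := by
      simpa using ((hasDerivAt_id (1:ℝ)).const_sub 1).const_mul α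
    have h2 : HasDerivAt (fun s : ℝ => (1 - β) * s) (1 - β) 1 := by
      simpa using (hasDerivAt_id (1:ℝ)).const_mul (1 - β)
    exact (h1.add h2).congr_deriv (by ring)
  have hden : HasDerivAt (fun s : ℝ => 1 - β * s) (-β) 1 := by
    simpa using ((hasDerivAt_id (1:ℝ)).const_mul β).const_sub 1
  have := hnum.div hden hne
  refine this.congr_deriv ?_
  have hb : (1:ℝ) - β ≠ 0 := by linarith
  field_simp
  ring

lemma iterate_fG {α β : ℝ} (hβ : β < 1) (n : ℕ) :
    (fG α β)^[n] 1 = 1 ∧ HasDerivAt ((fG α β)^[n]) (((1 - α) / (1 - β)) ^ n) 1 := by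
  induction n with
  | zero => exact ⟨rfl, by simpa using hasDerivAt_id (1:ℝ)⟩
  | succ n ih =>
    obtain ⟨h1, h2⟩ := ih
    constructor
    · rw [Function.iterate_succ_apply', h1, fG_one hβ]
    · rw [Function.iterate_succ']
      have hf : HasDerivAt (fG α β) ((1 - α) / (1 - β)) ((fG α β)^[n] 1) := by
        rw [h1]; exact fG_hasDerivAt hβ
      have hcomp := hf.comp 1 h2
      refine hcomp.congr_deriv ?_
      ring

lemma gGeom_hasDerivAt {θ : ℝ} (hθ : θ < 1) :
    HasDerivAt (gGeom θ) (θ / (1 - θ)) 1 := by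
  have hne : (1:ℝ) - θ ≠ 0 := by linarith
  have hne' : (1:ℝ) - θ * 1 ≠ 0 := by simpa using hne
  have hden : HasDerivAt (fun s : ℝ => 1 - θ * s) (-θ) 1 := by
    simpa using ((hasDerivAt_id (1:ℝ)).const_mul θ).const_sub 1
  have := ((hasDerivAt_const (1:ℝ) (1 - θ)).div hden hne')
  refine this.congr_deriv ?_
  field_simp
  ring

theorem hstep_conditional_mean (α β θ : ℝ) (hβ : 0 < β) (hβα : β < α) (hα : α < 1)
    (hβθ : β < θ) (hθ : θ < 1)
    (h : ℕ) (hh : 1 ≤ h) (x : ℕ) (ω : ℝ) (hω : ω = (1 - α) / (1 - β)) :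
    deriv (fun s : ℝ => gGeom θ s * ((fG α β)^[h] s) ^ x / gGeom θ ((fG α β)^[h] s)) 1
      = ω ^ h * x + ((1 - ω ^ h) / (1 - ω)) * ((1 - ω) * θ / (1 - θ)) := by
  have hβ1 : β < 1 := by linarith
  have hθ1 : (1:ℝ) - θ ≠ 0 := by linarith
  obtain ⟨hF1, hFd⟩ := iterate_fG (α := α) hβ1 h
  rw [← hω] at hFd
  have hg1 : gGeom θ 1 = 1 := by simp [gGeom]; field_simp; exact hθ1
  set c := θ / (1 - θ) with hc
  have hgd := gGeom_hasDerivAt (θ := θ) hθ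
  rw [← hc] at hgd
  -- numerator : g(s) * F(s)^x
  have hpow : HasDerivAt (fun s : ℝ => ((fG α β)^[h] s) ^ x) (x * ω ^ h) 1 := by
    have := hFd.fun_pow x
    simpa [hF1] using this
  have hnum : HasDerivAt (fun s : ℝ => gGeom θ s * ((fG α β)^[h] s) ^ x)
      (c + x * ω ^ h) 1 := by
    have := hgd.fun_mul hpow
    simpa [hg1, hF1] using this
  -- denominator : g(F(s))
  have hdenom : HasDerivAt (fun s : ℝ => gGeom θ ((fG α β)^[h] s)) (c * ω ^ h) 1 := by
    have hg' : HasDerivAt (gGeom θ) c ((fG α β)^[h] 1) := by rw [hF1]; exact hgd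
    exact hg'.comp 1 hFd
  have hdne : gGeom θ ((fG α β)^[h] 1) ≠ 0 := by rw [hF1, hg1]; norm_num
  have hFull := hnum.fun_div hdenom hdne
  rw [hFull.deriv]
  rw [hF1, hg1]
  have hω1 : ω ≠ 1 := by
    rw [hω]
    have : (1 - α) / (1 - β) < 1 := by
      rw [div_lt_one (by linarith)]; linarith
    linarith
  have hωne : (1:ℝ) - ω ≠ 0 := by intro hcon; apply hω1; linarith
  have : (1 - ω ^ h) / (1 - ω) * ((1 - ω) * θ / (1 - θ)) = (1 - ω ^ h) * c := by
    rw [hc]; field_simp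
  rw [this, hc]
  field_simp
  ring
end

section
/- (Theorem 3.1, case x = 0, y = 0.) Let 0 < β < α < 1, β < θ < 1 and β < αθ, let p_ε be the NoGeAR(1) innovation pmf and p1 the one-step transition function of the NoGeAR(1) chain, and set A = ∑_{k=1}^{∞} α^k p_ε(k). Then the two-step ahead transition probability from state 0 to state 0 satisfies ∑_{k=0}^{∞} p1(0,k)·p1(k,0) = (1−αθ)·(1−αθ+A), the series on the left being convergent. -/
/-- The quantity `A = ∑_{k=1}^∞ α^k p_ε(k)` of Theorem 3.1. -/
noncomputable def Aconst (α β θ : ℝ) : ℝ :=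
  ∑' k : ℕ, α ^ (k + 1) * pEps α β θ (k + 1)

/-- The quantity `B(x,k)` of Theorem 3.1 (for x, k ≥ 1). -/
noncomputable def Bfun (α β θ : ℝ) (x k : ℕ) : ℝ :=
  ∑ m ∈ Finset.Icc 1 x, ∑ j ∈ Finset.Icc 1 (min m k),
    (k.choose j : ℝ) * ((m - 1).choose (j - 1) : ℝ) *
      ((1 - α) * (1 - β)) ^ j * α ^ (k - j) * β ^ (m - j) * pEps α β θ (x - m)

theorem two_step_zero_zero (α β θ : ℝ) (hβ : 0 < β) (hβα : β < α) (hα : α < 1)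
    (hβθ : β < θ) (hθ : θ < 1) (hβαθ : β < α * θ) :
    HasSum (fun k : ℕ => p1 α β θ 0 k * p1 α β θ k 0)
      ((1 - α * θ) * (1 - α * θ + Aconst α β θ)) := by
  have hα0 : 0 < α := hβ.trans hβα
  have hθ0 : 0 < θ := hβ.trans hβθ
  have hg : ∀ k : ℕ, α ^ (k + 1) * pEps α β θ (k + 1)
      = ((α * θ - β) / (θ - β) * (1 - θ) * (α * θ)) * (α * θ) ^ k
        + ((1 - (α * θ - β) / (θ - β)) * (1 - β) * (α * β)) * (α * β) ^ k := by
    intro k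
    simp only [pEps, mul_pow, pow_succ]
    ring
  have hs1 : Summable (fun k : ℕ => ((α * θ - β) / (θ - β) * (1 - θ) * (α * θ)) * (α * θ) ^ k) :=
    (summable_geometric_of_lt_one (by positivity) (by nlinarith)).mul_left _
  have hs2 : Summable (fun k : ℕ => ((1 - (α * θ - β) / (θ - β)) * (1 - β) * (α * β)) * (α * β) ^ k) :=
    (summable_geometric_of_lt_one (by positivity) (by nlinarith)).mul_left _
  have hgs : Summable (fun k : ℕ => α ^ (k + 1) * pEps α β θ (k + 1)) :=
    (hs1.add hs2).congr (fun k => (hg k).symm)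
  have hA : HasSum (fun k : ℕ => α ^ (k + 1) * pEps α β θ (k + 1)) (Aconst α β θ) := by
    rw [Aconst]; exact hgs.hasSum
  have key : HasSum (fun n : ℕ => p1 α β θ 0 (n + 1) * p1 α β θ (n + 1) 0)
      ((1 - α * θ) * (1 - α * θ + Aconst α β θ)
        - ∑ i ∈ Finset.range 1, p1 α β θ 0 i * p1 α β θ i 0) := by
    have h := hA.mul_left (1 - α * θ)
    have heq : ∀ n : ℕ, (1 - α * θ) * (α ^ (n + 1) * pEps α β θ (n + 1))
        = p1 α β θ 0 (n + 1) * p1 α β θ (n + 1) 0 := by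
      intro n
      simp [p1]
      ring
    have h2 := h.congr_fun (fun n => (heq n).symm)
    convert h2 using 1
    · rfl
    simp [p1]
    ring
  exact (hasSum_nat_add_iff' 1).mp key
end
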